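/- Let n ≥ 1 be an integer, let c be a real number, and let 0 < λ_1 ≤ λ_2 ≤ λ_3 ≤ ⋯ be a nondecreasing sequence of real numbers with λ_i + c > 0 for every i ≥ 1, satisfying for every integer k ≥ 1 the Yang-type inequality Σ_{i=1}^k (λ_{k+1} − λ_i)² ≤ (4/n) Σ_{i=1}^k (λ_{k+1} − λ_i)(λ_i + c). Then for every integer k ≥ 1 one has λ_{k+1} + c ≤ (1 + 4/n)(λ_1 + c) k^{2/n}. -/

import Mathlib

set_option maxHeartbeats 1000000

open Finset Real

private lemma bern_lin {q y : ℝ} (hq : (-1 ≤ q ∧ q ≤ 0) ∨ 1 ≤ q) (hy : 0 ≤ y) :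
    1 + q * y ≤ (1 + y) ^ q := by
  rcases hq with ⟨hq1, hq2⟩ | hq
  · have hb : (0:ℝ) < 1 + y := by linarith
    have hq' : q = -(-q) := by ring
    have h1 : (1 + y) ^ (-q) ≤ 1 + (-q) * y :=
      rpow_one_add_le_one_add_mul_self (by linarith) (by linarith) (by linarith)
    have hz : 0 < (1 + y) ^ (-q) := rpow_pos_of_pos hb _
    rw [hq', Real.rpow_neg hb.le]
    rcases le_or_gt (1 + -(-q) * y) 0 with hc | hc
    · exact le_trans hc (inv_pos.mpr hz).le
    · have h2 : (1 + -(-q) * y) * ((1 + y) ^ (-q)) ≤ ((1 + y) ^ (-q))⁻¹ * ((1 + y) ^ (-q)) := by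
        rw [inv_mul_cancel₀ hz.ne']
        nlinarith [mul_le_mul_of_nonneg_left h1 hc.le, sq_nonneg ((-q) * y)]
      exact le_of_mul_le_mul_right h2 hz
  · exact one_add_mul_self_le_rpow_one_add (by linarith) hq

private lemma bern_integrate {q : ℝ} (hq : 0 ≤ q)
    (hbase : ∀ t : ℝ, 0 ≤ t → 1 + (q-1)*t ≤ (1+t)^(q-1)) :
    ∀ y : ℝ, 0 ≤ y → 1 + q*y + q*(q-1)/2*y^2 ≤ (1+y)^q := by
  have hmono : MonotoneOn (fun t : ℝ => (1+t)^q - (1 + q*t + q*(q-1)/2*t^2)) (Set.Ici 0) := by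
    apply monotoneOn_of_deriv_nonneg (convex_Ici 0)
    · apply ContinuousOn.sub
      · apply ContinuousOn.rpow_const (by fun_prop)
        intro t ht
        simp only [Set.mem_Ici] at ht
        exact Or.inl (by positivity)
      · fun_prop
    · intro t ht
      rw [interior_Ici] at ht
      have h1t : (0:ℝ) < 1 + t := by simp only [Set.mem_Ioi] at ht; linarith
      have hA : HasDerivAt (fun t : ℝ => (1+t)^q) (1 * q * (1+t)^(q-1)) t :=
        HasDerivAt.rpow_const ((hasDerivAt_id t).const_add 1) (Or.inl h1t.ne')
      have hB : HasDerivAt (fun t : ℝ => 1 + q*t + q*(q-1)/2*t^2)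
          (q * 1 + q*(q-1)/2 * (2*t)) t := by
        have h2 : HasDerivAt (fun t : ℝ => t^2) (2*t) t := by
          simpa using hasDerivAt_pow 2 t
        exact (((hasDerivAt_id t).const_mul q).const_add 1).add (h2.const_mul (q*(q-1)/2))
      exact ((hA.sub hB).differentiableAt).differentiableWithinAt
    · intro t ht
      rw [interior_Ici] at ht
      have ht0 : (0:ℝ) ≤ t := le_of_lt (by simpa using ht)
      have h1t : (0:ℝ) < 1 + t := by linarith
      have hA : HasDerivAt (fun t : ℝ => (1+t)^q) (1 * q * (1+t)^(q-1)) t :=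
        HasDerivAt.rpow_const ((hasDerivAt_id t).const_add 1) (Or.inl h1t.ne')
      have hB : HasDerivAt (fun t : ℝ => 1 + q*t + q*(q-1)/2*t^2)
          (q * 1 + q*(q-1)/2 * (2*t)) t := by
        have h2 : HasDerivAt (fun t : ℝ => t^2) (2*t) t := by
          simpa using hasDerivAt_pow 2 t
        exact (((hasDerivAt_id t).const_mul q).const_add 1).add (h2.const_mul (q*(q-1)/2))
      have hD : HasDerivAt (fun t : ℝ => (1+t)^q - (1 + q*t + q*(q-1)/2*t^2))
          (1 * q * (1+t)^(q-1) - (q * 1 + q*(q-1)/2 * (2*t))) t := hA.sub hB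
      rw [hD.deriv]
      have hb := hbase t ht0
      nlinarith [hb, hq, mul_nonneg hq (sub_nonneg.mpr hb)]
  intro y hy
  have h0 : (fun t : ℝ => (1+t)^q - (1 + q*t + q*(q-1)/2*t^2)) 0 ≤
      (fun t : ℝ => (1+t)^q - (1 + q*t + q*(q-1)/2*t^2)) y :=
    hmono (Set.self_mem_Ici) hy hy
  simp only [add_zero, mul_zero, zero_pow, ne_eq, OfNat.ofNat_ne_zero, not_false_eq_true] at h0
  rw [Real.one_rpow] at h0
  nlinarith [h0]

private lemma bern_integrate2 {q : ℝ} (hq : 0 ≤ q)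
    (hbase : ∀ t : ℝ, 0 ≤ t → 1 + (q-1)*t + (q-1)*(q-2)/2*t^2 ≤ (1+t)^(q-1)) :
    ∀ y : ℝ, 0 ≤ y →
      1 + q*y + q*(q-1)/2*y^2 + q*(q-1)*(q-2)/6*y^3 ≤ (1+y)^q := by
  have hmono : MonotoneOn
      (fun t : ℝ => (1+t)^q - (1 + q*t + q*(q-1)/2*t^2 + q*(q-1)*(q-2)/6*t^3)) (Set.Ici 0) := by
    apply monotoneOn_of_deriv_nonneg (convex_Ici 0)
    · apply ContinuousOn.sub
      · apply ContinuousOn.rpow_const (by fun_prop)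
        intro t ht
        simp only [Set.mem_Ici] at ht
        exact Or.inl (by positivity)
      · fun_prop
    · intro t ht
      rw [interior_Ici] at ht
      have h1t : (0:ℝ) < 1 + t := by simp only [Set.mem_Ioi] at ht; linarith
      have hA : HasDerivAt (fun t : ℝ => (1+t)^q) (1 * q * (1+t)^(q-1)) t :=
        HasDerivAt.rpow_const ((hasDerivAt_id t).const_add 1) (Or.inl h1t.ne')
      have hB : HasDerivAt (fun t : ℝ => 1 + q*t + q*(q-1)/2*t^2 + q*(q-1)*(q-2)/6*t^3)
          ((q * 1 + q*(q-1)/2 * (2*t)) + q*(q-1)*(q-2)/6 * (3*t^2)) t := by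
        have h2 : HasDerivAt (fun t : ℝ => t^2) (2*t) t := by
          simpa using hasDerivAt_pow 2 t
        have h3 : HasDerivAt (fun t : ℝ => t^3) (3*t^2) t := by
          simpa using hasDerivAt_pow 3 t
        exact ((((hasDerivAt_id t).const_mul q).const_add 1).add
          (h2.const_mul (q*(q-1)/2))).add (h3.const_mul (q*(q-1)*(q-2)/6))
      exact ((hA.sub hB).differentiableAt).differentiableWithinAt
    · intro t ht
      rw [interior_Ici] at ht
      have ht0 : (0:ℝ) ≤ t := le_of_lt (by simpa using ht)
      have h1t : (0:ℝ) < 1 + t := by linarith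
      have hA : HasDerivAt (fun t : ℝ => (1+t)^q) (1 * q * (1+t)^(q-1)) t :=
        HasDerivAt.rpow_const ((hasDerivAt_id t).const_add 1) (Or.inl h1t.ne')
      have hB : HasDerivAt (fun t : ℝ => 1 + q*t + q*(q-1)/2*t^2 + q*(q-1)*(q-2)/6*t^3)
          ((q * 1 + q*(q-1)/2 * (2*t)) + q*(q-1)*(q-2)/6 * (3*t^2)) t := by
        have h2 : HasDerivAt (fun t : ℝ => t^2) (2*t) t := by
          simpa using hasDerivAt_pow 2 t
        have h3 : HasDerivAt (fun t : ℝ => t^3) (3*t^2) t := by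
          simpa using hasDerivAt_pow 3 t
        exact ((((hasDerivAt_id t).const_mul q).const_add 1).add
          (h2.const_mul (q*(q-1)/2))).add (h3.const_mul (q*(q-1)*(q-2)/6))
      have hD : HasDerivAt (fun t : ℝ => (1+t)^q - (1 + q*t + q*(q-1)/2*t^2 + q*(q-1)*(q-2)/6*t^3))
          (1 * q * (1+t)^(q-1) - ((q * 1 + q*(q-1)/2 * (2*t)) + q*(q-1)*(q-2)/6 * (3*t^2))) t := hA.sub hB
      rw [hD.deriv]
      have hb := hbase t ht0
      nlinarith [hb, hq, mul_nonneg hq (sub_nonneg.mpr hb)]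
  intro y hy
  have h0 := hmono (Set.self_mem_Ici) hy hy
  simp only [add_zero, mul_zero, zero_pow, ne_eq, OfNat.ofNat_ne_zero, not_false_eq_true] at h0
  rw [Real.one_rpow] at h0
  nlinarith [h0]

private lemma bern_cubic {p : ℝ} (hp : 1 ≤ p) (hcase : p ≤ 2 ∨ 3 ≤ p) {x : ℝ} (hx : 0 ≤ x) :
    1 + p*x + p*(p-1)/2*x^2 + p*(p-1)*(p-2)/6*x^3 ≤ (1+x)^p := by
  have hbase : ∀ t : ℝ, 0 ≤ t → 1 + (p-2)*t ≤ (1+t)^(p-2) := by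
    intro t ht
    refine bern_lin ?_ ht
    rcases hcase with h | h
    · exact Or.inl ⟨by linarith, by linarith⟩
    · exact Or.inr (by linarith)
  have hquad : ∀ t : ℝ, 0 ≤ t → 1 + (p-1)*t + (p-1)*(p-2)/2*t^2 ≤ (1+t)^(p-1) := by
    have := bern_integrate (q := p-1) (by linarith) (by
      intro t ht
      have := hbase t ht
      have hee : p - 1 - 1 = p - 2 := by ring
      rw [hee]
      exact this)
    intro t ht
    have h := this t ht
    nlinarith [h]
  have := bern_integrate2 (q := p) (by linarith) hquad
  exact this x hx

private lemma key_main {j e R : ℝ} (hj : 1 ≤ j) (he : 0 < e)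
    (hR : (j+1)*(3*j^2 + 3*e*j + e*(2*e-1)) ≤ 3*j^2*R) :
    j + (1+e) ≤ R ∧ (1+e)*e ≤ (R - j - (1+e))*(R + j - e) := by
  have hj0 : 0 < j := by linarith
  have hj1 : 0 ≤ j - 1 := by linarith
  have hA : 0 < (2+2*e)*j + 2*e - 1 := by nlinarith
  have h1 : e*((2+2*e)*j + 2*e - 1) ≤ 3*j^2*(R - j - (1+e)) := by nlinarith [hR]
  have h2 : e*((2+2*e)*j + 2*e - 1) + 3*j^2*(2*j+1) ≤ 3*j^2*(R + j - e) := by nlinarith [h1]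
  have heA : 0 < e*((2+2*e)*j + 2*e - 1) := mul_pos he hA
  have hf1 : 0 < 3*j^2*(R - j - (1+e)) := lt_of_lt_of_le heA h1
  have hk1 : j + (1+e) ≤ R := by nlinarith [hf1]
  refine ⟨hk1, ?_⟩
  have hprod : (e*((2+2*e)*j + 2*e-1)) * (e*((2+2*e)*j+2*e-1) + 3*j^2*(2*j+1)) ≤
      (3*j^2*(R-j-(1+e))) * (3*j^2*(R+j-e)) :=
    mul_le_mul h1 h2 (by positivity) hf1.le
  -- Q ≥ 0 certificate
  have t1 : (0:ℝ) ≤ e*(1-2*e)^2 := by positivity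
  have t2 : (0:ℝ) ≤ 3*j^2*(j-1)*(j+1) :=
    mul_nonneg (mul_nonneg (by positivity) hj1) (by linarith)
  have t3 : (0:ℝ) ≤ e*j^2*(3*j^2+18*j+6) := by positivity
  have t4 : (0:ℝ) ≤ 8*j^2*e^2 + 4*j^2*e^3 := by positivity
  have t5 : (0:ℝ) ≤ 4*j*e*(j-1) := by
    have := mul_nonneg (mul_nonneg (by positivity : (0:ℝ) ≤ 4*j) he.le) hj1
    linarith
  have t6 : (0:ℝ) ≤ 4*j*e^2*(1+2*e) := by positivity
  have hQ : 9*j^4*((1+e)*e) ≤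
      (e*((2+2*e)*j+2*e-1)) * (e*((2+2*e)*j+2*e-1) + 3*j^2*(2*j+1)) := by
    nlinarith [t1, t2, t3, t4, t5, t6, mul_nonneg he.le t2, mul_nonneg he.le t5,
      mul_nonneg he.le t1, mul_nonneg he.le t3, mul_nonneg he.le t4, mul_nonneg he.le t6]
  have hchain : 9*j^4*((1+e)*e) ≤ 9*j^4*((R-j-(1+e))*(R+j-e)) := by nlinarith [hprod, hQ]
  have h9 : (0:ℝ) < 9*j^4 := by positivity
  exact (mul_le_mul_iff_right₀ h9).mp hchain

private lemma step_main {j e L S x N N' R X : ℝ} (hj : 1 ≤ j) (he : 0 < e)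
    (hN : N = (1+e)*L^2 - j*S) (hN' : N' = (1+e)*(L+x)^2 - (j+1)*(S+x^2))
    (hq : (j*x - (1+e)*L)^2 ≤ (1+2*e)*N - (1+e)*e*L^2)
    (hpR : (1+2*e)*R = j*(j+1)*(X-1))
    (hk1 : j + (1+e) ≤ R) (hk2 : (1+e)*e ≤ (R - j - (1+e))*(R + j - e)) :
    j^2*N' ≤ j*(j+1)*X*N := by
  set w : ℝ := j*x - (1+e)*L with hw
  have hRe : 0 < R + j - e := by nlinarith
  have hR0 : 0 < R := by nlinarith
  have h1 : (1+e)*e*L^2 + w^2 ≤ (1+2*e)*N := by nlinarith [hq]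
  have h2 : R*((1+e)*e*L^2 + w^2) ≤ R*((1+2*e)*N) := mul_le_mul_of_nonneg_left h1 hR0.le
  have h3 : 0 ≤ ((R+j-e)*w - (1+e)*e*L)^2 + (1+e)*e*L^2*((R-j-(1+e))*(R+j-e) - (1+e)*e) :=
    add_nonneg (sq_nonneg _) (mul_nonneg (by positivity) (by linarith))
  have hid : j*(j+1)*X*N - j^2*N' =
      (1+2*e)*R*N - ((1+e)*e*L^2*(j+1+e) + 2*(1+e)*e*L*w + (e-j)*w^2) := by
    rw [hN, hN', hw]
    linear_combination (j*S - (1+e)*L^2)*hpR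
  have h4 : (R+j-e)*(R*((1+e)*e*L^2+w^2) -
        ((1+e)*e*L^2*(j+1+e) + 2*(1+e)*e*L*w + (e-j)*w^2)) =
      ((R+j-e)*w - (1+e)*e*L)^2 + (1+e)*e*L^2*((R-j-(1+e))*(R+j-e) - (1+e)*e) := by
    ring
  have h5 : 0 ≤ (R+j-e)*(R*((1+e)*e*L^2+w^2) -
      ((1+e)*e*L^2*(j+1+e) + 2*(1+e)*e*L*w + (e-j)*w^2)) := by rw [h4]; exact h3
  have h6 : 0 ≤ R*((1+e)*e*L^2+w^2) -
      ((1+e)*e*L^2*(j+1+e) + 2*(1+e)*e*L*w + (e-j)*w^2) := nonneg_of_mul_nonneg_right h5 hRe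
  linarith [h2, h6, hid]

/-- Shifted abstract form of the Cheng–Yang eigenvalue bound. -/
theorem stmt2 (n : ℕ) (hn : 1 ≤ n) (c : ℝ) (lam : ℕ → ℝ)
    (hpos : 0 < lam 1)
    (hmono : ∀ i, 1 ≤ i → lam i ≤ lam (i + 1))
    (hshift : ∀ i, 1 ≤ i → 0 < lam i + c)
    (hyang : ∀ k : ℕ, 1 ≤ k →
      ∑ i ∈ Finset.Icc 1 k, (lam (k + 1) - lam i) ^ 2
        ≤ (4 / (n : ℝ)) * ∑ i ∈ Finset.Icc 1 k, (lam (k + 1) - lam i) * (lam i + c)) :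
    ∀ k : ℕ, 1 ≤ k →
      lam (k + 1) + c ≤ (1 + 4 / (n : ℝ)) * (lam 1 + c) * (k : ℝ) ^ ((2 : ℝ) / (n : ℝ)) := by
  intro k hk
  have hn0 : (0:ℝ) < (n:ℝ) := by exact_mod_cast Nat.pos_of_ne_zero (by omega)
  set e : ℝ := 2/(n:ℝ) with he_def
  have he : 0 < e := by positivity
  set μ : ℕ → ℝ := fun i => lam i + c with hμdef
  have hμ1 : 0 < μ 1 := hshift 1 le_rfl
  set L : ℕ → ℝ := fun j => ∑ i ∈ Finset.Icc 1 j, μ i with hLdef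
  set S : ℕ → ℝ := fun j => ∑ i ∈ Finset.Icc 1 j, (μ i)^2 with hSdef
  set Nq : ℕ → ℝ := fun j => (1+e)*(L j)^2 - (j:ℝ)*(S j) with hNqdef
  clear_value e μ L S Nq
  -- Yang quadratic in squared form
  have hyq : ∀ j : ℕ, 1 ≤ j →
      ((j:ℝ)*(μ (j+1)) - (1+e)*(L j))^2 ≤ (1+2*e)*(Nq j) - (1+e)*e*(L j)^2 := by
    intro j hj
    have h := hyang j hj
    have hcard : (Finset.Icc 1 j).card = j := by rw [Nat.card_Icc]; omega
    have e1 : ∑ i ∈ Finset.Icc 1 j, (lam (j+1) - lam i)^2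
        = (j:ℝ)*(μ (j+1))^2 - 2*(μ (j+1))*(L j) + S j := by
      have hc : ∀ i ∈ Finset.Icc 1 j, (lam (j+1) - lam i)^2
          = ((μ (j+1))^2 - 2*(μ (j+1))*(μ i)) + (μ i)^2 := by
        intro i _; simp only [hμdef]; ring
      rw [Finset.sum_congr rfl hc, Finset.sum_add_distrib, Finset.sum_sub_distrib,
        Finset.sum_const, hcard, ← Finset.mul_sum, nsmul_eq_mul]
      try simp only [hLdef, hSdef]
      try ring
    have e2 : ∑ i ∈ Finset.Icc 1 j, (lam (j+1) - lam i)*(lam i + c)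
        = (μ (j+1))*(L j) - S j := by
      have hc : ∀ i ∈ Finset.Icc 1 j, (lam (j+1) - lam i)*(lam i + c)
          = (μ (j+1))*(μ i) - (μ i)^2 := by
        intro i _; simp only [hμdef]; ring
      rw [Finset.sum_congr rfl hc, Finset.sum_sub_distrib, ← Finset.mul_sum]
      try simp only [hLdef, hSdef]
      try ring
    rw [e1, e2] at h
    have h4n : (4:ℝ)/(n:ℝ) = 2*e := by rw [he_def]; ring
    rw [h4n] at h
    have hj0 : (0:ℝ) < (j:ℝ) := by exact_mod_cast hj
    have hq0 : (j:ℝ)*(μ (j+1))^2 - 2*(1+e)*(L j)*(μ (j+1)) + (1+2*e)*(S j) ≤ 0 := by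
      nlinarith [h]
    have hmj := mul_le_mul_of_nonneg_left hq0 hj0.le
    simp only [hNqdef]
    nlinarith [hmj]
  -- sum recursions
  have hLrec : ∀ j : ℕ, 1 ≤ j → L (j+1) = L j + μ (j+1) := by
    intro j hj
    simp only [hLdef]
    exact Finset.sum_Icc_succ_top (by omega) μ
  have hSrec : ∀ j : ℕ, 1 ≤ j → S (j+1) = S j + (μ (j+1))^2 := by
    intro j hj
    simp only [hSdef]
    exact Finset.sum_Icc_succ_top (by omega) _
  have hL1 : L 1 = μ 1 := by simp [hLdef]
  have hS1 : S 1 = (μ 1)^2 := by simp [hSdef]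
  -- main induction
  have hNbound : ∀ j : ℕ, 1 ≤ j → Nq j ≤ e*(μ 1)^2*((j:ℝ))^((2:ℝ)+2*e) := by
    intro j hj
    induction j, hj using Nat.le_induction with
    | base =>
      simp only [hNqdef, hL1, hS1, Nat.cast_one]
      rw [Real.one_rpow]
      nlinarith [sq_nonneg (μ 1)]
    | succ j hj ih =>
      have hj0 : (0:ℝ) < (j:ℝ) := by exact_mod_cast Nat.lt_of_lt_of_le Nat.zero_lt_one hj
      have hj1 : (1:ℝ) ≤ (j:ℝ) := by exact_mod_cast hj
      have hb : (0:ℝ) < ((j:ℝ)+1)/(j:ℝ) := by positivity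
      set X : ℝ := (((j:ℝ)+1)/(j:ℝ))^((1:ℝ)+2*e) with hXdef
      have hXpos : 0 < X := Real.rpow_pos_of_pos hb _
      have hpe : (0:ℝ) < 1+2*e := by linarith
      set R : ℝ := (j:ℝ)*((j:ℝ)+1)*(X-1)/(1+2*e) with hRdef
      clear_value X R
      have hpR : (1+2*e)*R = (j:ℝ)*((j:ℝ)+1)*(X-1) := by
        rw [hRdef]; field_simp
      have hkey : (j:ℝ) + (1+e) ≤ R ∧ (1+e)*e ≤ (R - (j:ℝ) - (1+e))*(R + (j:ℝ) - e) := by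
        by_cases hn3 : n = 3
        · -- n = 3
          have he3 : e = 2/3 := by rw [he_def, hn3]; norm_num
          have h73 : X = (((j:ℝ)+1)/(j:ℝ))^((7:ℝ)/3) := by
            rw [hXdef, he3]; norm_num
          have hXcube : X^(3:ℕ) = (((j:ℝ)+1)/(j:ℝ))^(7:ℕ) := by
            rw [h73, ← Real.rpow_natCast ((((j:ℝ)+1)/(j:ℝ))^((7:ℝ)/3)) 3,
              ← Real.rpow_mul hb.le]
            rw [show ((7:ℝ)/3*((3:ℕ):ℝ)) = ((7:ℕ):ℝ) by norm_num]
            rw [Real.rpow_natCast]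
          have hkeypoly : (j:ℝ)*(9*(j:ℝ)^2+21*(j:ℝ)+14)^3 ≤ 729*((j:ℝ)+1)^7 := by
            nlinarith [pow_nonneg hj0.le 4, pow_nonneg hj0.le 3, pow_nonneg hj0.le 2, hj0.le]
          have hLBeq : 1 + 7/(3*(j:ℝ)) + 14/(9*(j:ℝ)^2)
              = (9*(j:ℝ)^2+21*(j:ℝ)+14)/(9*(j:ℝ)^2) := by
            field_simp; ring
          have hLBpos : (0:ℝ) ≤ 1 + 7/(3*(j:ℝ)) + 14/(9*(j:ℝ)^2) := by positivity
          have hcube2 : (1 + 7/(3*(j:ℝ)) + 14/(9*(j:ℝ)^2))^(3:ℕ) ≤ X^(3:ℕ) := by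
            rw [hXcube, hLBeq, div_pow, div_pow]
            rw [div_le_div_iff₀ (by positivity) (by positivity)]
            linarith [mul_le_mul_of_nonneg_left hkeypoly (show (0:ℝ) ≤ (j:ℝ)^6 by positivity)]
          have hXLB : 1 + 7/(3*(j:ℝ)) + 14/(9*(j:ℝ)^2) ≤ X :=
            le_of_pow_le_pow_left₀ (by norm_num) hXpos.le hcube2
          have hcb3 : 3*(j:ℝ)^3 + (7:ℝ)/3*(3*(j:ℝ)^2 + 2*(j:ℝ)) ≤ 3*(j:ℝ)^3*X := by
            have hmul := mul_le_mul_of_nonneg_left hXLB (show (0:ℝ) ≤ 3*(j:ℝ)^3 by positivity)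
            have hident : 3*(j:ℝ)^3*(1 + 7/(3*(j:ℝ)) + 14/(9*(j:ℝ)^2))
                = 3*(j:ℝ)^3 + (7:ℝ)/3*(3*(j:ℝ)^2 + 2*(j:ℝ)) := by
              field_simp; ring
            linarith [hident ▸ hmul]
          have hpR3 : (7:ℝ)/3*(3*(j:ℝ)^2*R) = 3*(j:ℝ)^3*((j:ℝ)+1)*(X-1) := by
            have : ((1:ℝ)+2*e) = 7/3 := by rw [he3]; norm_num
            rw [← this]
            linear_combination 3*(j:ℝ)^2*hpR
          have hR3 : ((j:ℝ)+1)*(3*(j:ℝ)^2 + 2*(j:ℝ)) ≤ 3*(j:ℝ)^2*R := by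
            have h2 := mul_le_mul_of_nonneg_left hcb3 (show (0:ℝ) ≤ (j:ℝ)+1 by positivity)
            have h3 : (7:ℝ)/3*(((j:ℝ)+1)*(3*(j:ℝ)^2+2*(j:ℝ))) ≤ (7:ℝ)/3*(3*(j:ℝ)^2*R) := by
              nlinarith [h2, hpR3]
            linarith
          rw [he3]
          constructor
          · nlinarith [hR3, sq_nonneg (j:ℝ), hj1]
          · have hf1 : 2*(j:ℝ) ≤ 3*(j:ℝ)^2*(R - (j:ℝ) - (1+2/3)) := by nlinarith [hR3]
            have hf2 : 2*(j:ℝ) + 3*(j:ℝ)^2*(2*(j:ℝ)+1) ≤ 3*(j:ℝ)^2*(R + (j:ℝ) - 2/3) := by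
              nlinarith [hf1]
            have hprod := mul_le_mul hf1 hf2 (by positivity)
              (le_trans (by positivity) hf1)
            have h9 : (0:ℝ) < 9*(j:ℝ)^4 := by positivity
            have hQ3 : 9*(j:ℝ)^4*((1+2/3)*(2/3))
                ≤ (2*(j:ℝ))*(2*(j:ℝ) + 3*(j:ℝ)^2*(2*(j:ℝ)+1)) := by
              nlinarith [hj1, pow_nonneg hj0.le 2, pow_nonneg hj0.le 3, pow_nonneg hj0.le 4]
            have : 9*(j:ℝ)^4*((1+2/3)*(2/3)) ≤ 9*(j:ℝ)^4*((R - (j:ℝ) - (1+2/3))*(R + (j:ℝ) - 2/3)) := by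
              nlinarith [hprod, hQ3]
            exact (mul_le_mul_iff_right₀ h9).mp this
        · -- n ≠ 3 : use bern_cubic
          have hcase : (1+2*e) ≤ 2 ∨ 3 ≤ (1+2*e) := by
            rcases lt_or_ge n 3 with hlt | hge
            · right
              have : n = 1 ∨ n = 2 := by omega
              rcases this with h1 | h1 <;> rw [he_def, h1] <;> norm_num
            · left
              have hn4 : 4 ≤ n := by omega
              have h4 : (4:ℝ) ≤ (n:ℝ) := by exact_mod_cast hn4
              have : e ≤ 1/2 := by
                rw [he_def, div_le_div_iff₀ hn0 (by norm_num)]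
                linarith
              linarith
          have hcb := bern_cubic (p := 1+2*e) (by linarith) hcase
            (x := 1/(j:ℝ)) (by positivity)
          have hbeq : ((j:ℝ)+1)/(j:ℝ) = 1 + 1/(j:ℝ) := by field_simp
          have hXeq : X = (1 + 1/(j:ℝ))^((1:ℝ)+2*e) := by rw [hXdef, hbeq]
          have hcb' : 3*(j:ℝ)^3 + (1+2*e)*(3*(j:ℝ)^2 + 3*e*(j:ℝ) + e*(2*e-1))
              ≤ 3*(j:ℝ)^3*X := by
            have hmul := mul_le_mul_of_nonneg_left hcb (show (0:ℝ) ≤ 3*(j:ℝ)^3 by positivity)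
            have hident : 3*(j:ℝ)^3*(1 + (1+2*e)*(1/(j:ℝ)) + (1+2*e)*((1+2*e)-1)/2*(1/(j:ℝ))^2
                + (1+2*e)*((1+2*e)-1)*((1+2*e)-2)/6*(1/(j:ℝ))^3)
                = 3*(j:ℝ)^3 + (1+2*e)*(3*(j:ℝ)^2 + 3*e*(j:ℝ) + e*(2*e-1)) := by
              field_simp; ring
            rw [hXeq]
            calc 3*(j:ℝ)^3 + (1+2*e)*(3*(j:ℝ)^2+3*e*(j:ℝ)+e*(2*e-1))
                = 3*(j:ℝ)^3*(1 + (1+2*e)*(1/(j:ℝ)) + (1+2*e)*((1+2*e)-1)/2*(1/(j:ℝ))^2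
                  + (1+2*e)*((1+2*e)-1)*((1+2*e)-2)/6*(1/(j:ℝ))^3) := hident.symm
              _ ≤ 3*(j:ℝ)^3*((1+1/(j:ℝ))^((1:ℝ)+2*e)) := hmul
          have hpR3 : (1+2*e)*(3*(j:ℝ)^2*R) = 3*(j:ℝ)^3*((j:ℝ)+1)*(X-1) := by
            linear_combination 3*(j:ℝ)^2*hpR
          have hR : ((j:ℝ)+1)*(3*(j:ℝ)^2 + 3*e*(j:ℝ) + e*(2*e-1)) ≤ 3*(j:ℝ)^2*R := by
            have h2 := mul_le_mul_of_nonneg_left hcb' (show (0:ℝ) ≤ (j:ℝ)+1 by positivity)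
            have h3 : (1+2*e)*(((j:ℝ)+1)*(3*(j:ℝ)^2 + 3*e*(j:ℝ) + e*(2*e-1)))
                ≤ (1+2*e)*(3*(j:ℝ)^2*R) := by
              linarith [h2, hpR3]
            exact le_of_mul_le_mul_left h3 hpe
          exact key_main (j := (j:ℝ)) (e := e) (R := R) hj1 he hR
      -- apply the step lemma
      have hNeq : Nq j = (1+e)*(L j)^2 - (j:ℝ)*(S j) := by simp only [hNqdef]
      have hNeq' : Nq (j+1) = (1+e)*((L j) + μ (j+1))^2 - ((j:ℝ)+1)*((S j) + (μ (j+1))^2) := by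
        simp only [hNqdef, hLrec j hj, hSrec j hj]
        push_cast
        ring
      have hstep := step_main hj1 he hNeq hNeq' (hyq j hj) hpR hkey.1 hkey.2
      have hdiv : Nq (j+1) ≤ (((j:ℝ)+1)/(j:ℝ))*X*(Nq j) := by
        have hident : ((j:ℝ))^2*((((j:ℝ)+1)/(j:ℝ))*X*(Nq j)) = (j:ℝ)*((j:ℝ)+1)*X*(Nq j) := by
          field_simp
        have hmul : ((j:ℝ))^2*(Nq (j+1)) ≤ ((j:ℝ))^2*((((j:ℝ)+1)/(j:ℝ))*X*(Nq j)) := by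
          rw [hident]; exact hstep
        exact le_of_mul_le_mul_left hmul (by positivity)
      have hXfull : (((j:ℝ)+1))^((2:ℝ)+2*e)
          = (((j:ℝ)+1)/(j:ℝ))^((2:ℝ)+2*e) * ((j:ℝ))^((2:ℝ)+2*e) := by
        rw [Real.div_rpow (by positivity) hj0.le, div_mul_cancel₀]
        exact (Real.rpow_pos_of_pos hj0 _).ne'
      have hsplit : (((j:ℝ)+1)/(j:ℝ))^((2:ℝ)+2*e) = (((j:ℝ)+1)/(j:ℝ)) * X := by
        rw [hXdef, show (2:ℝ)+2*e = 1+(1+2*e) by ring, Real.rpow_add hb, Real.rpow_one]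
      have hchain : (((j:ℝ)+1)/(j:ℝ))*X*(Nq j)
          ≤ (((j:ℝ)+1)/(j:ℝ))*X*(e*(μ 1)^2*((j:ℝ))^((2:ℝ)+2*e)) :=
        mul_le_mul_of_nonneg_left ih (by positivity)
      have hfin : (((j:ℝ)+1)/(j:ℝ))*X*(e*(μ 1)^2*((j:ℝ))^((2:ℝ)+2*e))
          = e*(μ 1)^2*(((j:ℝ)+1))^((2:ℝ)+2*e) := by
        rw [hXfull, hsplit]; ring
      have hcast : ((j+1:ℕ):ℝ) = (j:ℝ)+1 := by push_cast; ring
      rw [hcast]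
      linarith [hdiv, hchain, hfin.le]
  -- final step at k
  have hyqk := hyq k hk
  have hNk := hNbound k hk
  have hk0 : (0:ℝ) < (k:ℝ) := by exact_mod_cast Nat.lt_of_lt_of_le Nat.zero_lt_one hk
  have hx : 0 < μ (k+1) := by
    simp only [hμdef]; exact hshift (k+1) (by omega)
  have hcs : e*((k:ℝ)*(μ (k+1)))^2 ≤ (1+2*e)^2*(Nq k) := by
    nlinarith [mul_le_mul_of_nonneg_left hyqk (show (0:ℝ) ≤ 1+2*e by linarith),
      mul_nonneg (show (0:ℝ) ≤ 1+e by linarith)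
        (sq_nonneg (e*(L k) - ((k:ℝ)*(μ (k+1)) - (1+e)*(L k))))]
  have hcs2 : ((k:ℝ)*(μ (k+1)))^2 ≤ ((1+2*e)*(μ 1)*((k:ℝ))^((1:ℝ)+e))^2 := by
    have h1 : e*((k:ℝ)*(μ (k+1)))^2 ≤ e*((1+2*e)^2*(μ 1)^2*((k:ℝ))^((2:ℝ)+2*e)) := by
      calc e*((k:ℝ)*(μ (k+1)))^2 ≤ (1+2*e)^2*(Nq k) := hcs
        _ ≤ (1+2*e)^2*(e*(μ 1)^2*((k:ℝ))^((2:ℝ)+2*e)) :=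
            mul_le_mul_of_nonneg_left hNk (by positivity)
        _ = e*((1+2*e)^2*(μ 1)^2*((k:ℝ))^((2:ℝ)+2*e)) := by ring
    have h2 : ((k:ℝ)*(μ (k+1)))^2 ≤ (1+2*e)^2*(μ 1)^2*((k:ℝ))^((2:ℝ)+2*e) :=
      le_of_mul_le_mul_left h1 he
    have h3 : ((k:ℝ))^((2:ℝ)+2*e) = (((k:ℝ))^((1:ℝ)+e))^(2:ℕ) := by
      rw [← Real.rpow_natCast (((k:ℝ))^((1:ℝ)+e)) 2, ← Real.rpow_mul hk0.le]
      norm_num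
      rw [show ((1:ℝ)+e)*2 = 2+2*e by ring]
    calc ((k:ℝ)*(μ (k+1)))^2 ≤ (1+2*e)^2*(μ 1)^2*((k:ℝ))^((2:ℝ)+2*e) := h2
      _ = ((1+2*e)*(μ 1)*((k:ℝ))^((1:ℝ)+e))^2 := by rw [h3]; ring
  have hle : (k:ℝ)*(μ (k+1)) ≤ (1+2*e)*(μ 1)*((k:ℝ))^((1:ℝ)+e) :=
    le_of_pow_le_pow_left₀ (by norm_num) (by positivity) hcs2
  have hk1e : ((k:ℝ))^((1:ℝ)+e) = ((k:ℝ))^(e)*(k:ℝ) := by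
    rw [show (1:ℝ)+e = e+1 by ring, Real.rpow_add hk0, Real.rpow_one]
  have hgoal : μ (k+1) ≤ (1+2*e)*(μ 1)*((k:ℝ))^(e) := by
    rw [hk1e] at hle
    have h' : μ (k+1)*(k:ℝ) ≤ ((1+2*e)*(μ 1)*((k:ℝ))^(e))*(k:ℝ) := by linarith [hle]
    exact le_of_mul_le_mul_right h' hk0
  calc lam (k+1) + c = μ (k+1) := by simp only [hμdef]
    _ ≤ (1+2*e)*(μ 1)*((k:ℝ))^(e) := hgoal
    _ = (1 + 4/(n:ℝ))*(lam 1 + c)*((k:ℝ))^(e) := by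
        simp only [hμdef]
        rw [he_def]
        ring
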